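/- Let K be a separable complex Hilbert space and let M ⊆ L²(𝕋,H²_K) be a reducing subspace for the bilateral shift U with associated measurable range function J_M (a range function in H²_K). Then M is invariant under Ŝ if and only if J_M(λ) is invariant under the unilateral shift S for a.e. λ ∈ 𝕋. -/

import Mathlib

noncomputable section

open MeasureTheory Complex Submodule
open scoped InnerProductSpace ENNReal ComplexConjugate

set_option synthInstance.maxHeartbeats 1000000
set_option maxHeartbeats 1600000

namespace ShiftPaper

instance : Fact ((0:ℝ) < 1) := ⟨one_pos⟩

/-- The circle, modelled as `ℝ/ℤ`. -/
abbrev 𝕋 : Type := UnitAddCircle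

/-- The normalized Haar (Lebesgue) probability measure on the circle. -/
abbrev μT : Measure 𝕋 := AddCircle.haarAddCircle

/-- The space `L²(𝕋, E)` of square-integrable `E`-valued functions on the circle. -/
abbrev L2 (E : Type*) [NormedAddCommGroup E] := Lp E 2 μT

lemma norm_fourier (n : ℤ) (t : 𝕋) : ‖fourier n t‖ = 1 := by
  rw [fourier_apply, Circle.norm_coe]

section mulF

variable {E : Type*} [NormedAddCommGroup E] [NormedSpace ℂ E]

lemma memLp_mulF (n : ℤ) (f : L2 E) :
    MemLp (fun t => fourier n t • (f : 𝕋 → E) t) 2 μT := by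
  refine MemLp.of_le (Lp.memLp f)
    (((fourier n).continuous.aestronglyMeasurable).smul (Lp.aestronglyMeasurable f)) ?_
  refine Filter.Eventually.of_forall fun t => ?_
  rw [norm_smul, norm_fourier, one_mul]

/-- Multiplication by `fourier n` (i.e. by `λ ↦ λⁿ`) as a bounded operator on `L²(𝕋, E)`.
For `n = 1` this is the bilateral shift `U`; for general `n : ℤ` it is `Uⁿ`. -/
def mulF (n : ℤ) : L2 E →L[ℂ] L2 E :=
  LinearMap.mkContinuous
    { toFun := fun f => (memLp_mulF n f).toLp _
      map_add' := fun f g => by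
        rw [← MemLp.toLp_add (memLp_mulF n f) (memLp_mulF n g)]
        refine MemLp.toLp_congr _ _ ?_
        filter_upwards [Lp.coeFn_add f g] with t ht
        simp only [ht, Pi.add_apply, smul_add]
      map_smul' := fun c f => by
        simp only [RingHom.id_apply]
        rw [← MemLp.toLp_const_smul c (memLp_mulF n f)]
        refine MemLp.toLp_congr _ _ ?_
        filter_upwards [Lp.coeFn_smul c f] with t ht
        rw [ht]
        simp only [Pi.smul_apply]
        rw [smul_comm] }
    1
    (fun f => by
      simp only [LinearMap.coe_mk, AddHom.coe_mk, one_mul]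
      rw [Lp.norm_toLp _ (memLp_mulF n f), Lp.norm_def]
      refine le_of_eq (congrArg ENNReal.toReal ?_)
      refine eLpNorm_congr_norm_ae ?_
      refine Filter.Eventually.of_forall fun t => ?_
      rw [norm_smul, norm_fourier, one_mul])

lemma coeFn_mulF (n : ℤ) (f : L2 E) :
    (mulF n f : 𝕋 → E) =ᵐ[μT] fun t => fourier n t • (f : 𝕋 → E) t :=
  MemLp.coeFn_toLp (memLp_mulF n f)

end mulF

section HardySpace

variable (K : Type) [NormedAddCommGroup K] [InnerProductSpace ℂ K] [CompleteSpace K]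

/-- The continuous function `t ↦ fourier n t • x`. -/
def fourierSmulCM (n : ℤ) (x : K) : C(𝕋, K) :=
  ⟨fun t => fourier n t • x, (fourier n).continuous.smul continuous_const⟩

/-- The element of `L²(𝕋, K)` given by `t ↦ fourier n t • x`. -/
def expVec (n : ℤ) (x : K) : L2 K := ContinuousMap.toLp 2 μT ℂ (fourierSmulCM K n x)

lemma coeFn_expVec (n : ℤ) (x : K) :
    (expVec K n x : 𝕋 → K) =ᵐ[μT] fun t => fourier n t • x :=
  ContinuousMap.coeFn_toLp (𝕜 := ℂ) μT (fourierSmulCM K n x)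

/-- The Hardy space `H²(𝕋, K)`, as the subspace of `L²(𝕋, K)` of functions all of whose
weak Fourier coefficients of negative index vanish (equivalently, all of whose coordinate
functions with respect to an orthonormal basis of `K` lie in the scalar Hardy space `H²`). -/
def Hardy : Submodule ℂ (L2 K) :=
  ⨅ (n : ℤ) (_ : n < 0) (x : K), LinearMap.ker (innerSL ℂ (expVec K n x) : L2 K →ₗ[ℂ] ℂ)

lemma isClosed_Hardy : IsClosed ((Hardy K : Set (L2 K))) := by
  have h : (Hardy K : Set (L2 K)) = ⋂ (n : ℤ) (_ : n < 0) (x : K),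
      (LinearMap.ker (innerSL ℂ (expVec K n x) : L2 K →ₗ[ℂ] ℂ) : Set (L2 K)) := by
    simp only [Hardy, Submodule.coe_iInf]
  rw [h]
  exact isClosed_iInter fun n => isClosed_iInter fun _ => isClosed_iInter fun x =>
    (ContinuousLinearMap.isClosed_ker _)

/-- The Hardy space `H²(𝕋, K)` as a Hilbert space in its own right. -/
abbrev H2 := ↥(Hardy K)

instance : CompleteSpace (H2 K) := (isClosed_Hardy K).completeSpace_coe

end HardySpace


section Shift

variable (K : Type) [NormedAddCommGroup K] [InnerProductSpace ℂ K] [CompleteSpace K]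

lemma inner_expVec_mulF (n : ℤ) (x : K) (f : L2 K) :
    inner ℂ (expVec K n x) (mulF 1 f) = inner ℂ (expVec K (n - 1) x) f := by
  rw [MeasureTheory.L2.inner_def, MeasureTheory.L2.inner_def]
  refine integral_congr_ae ?_
  filter_upwards [coeFn_mulF 1 f, coeFn_expVec K n x, coeFn_expVec K (n-1) x] with t h1 h2 h3
  rw [h1, h2, h3, inner_smul_left, inner_smul_left, inner_smul_right,
    ← fourier_neg, ← fourier_neg, ← mul_assoc, ← fourier_add]
  have h : -n + 1 = -(n - 1) := by ring
  rw [h]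

lemma mulF_mem_hardy {f : L2 K} (hf : f ∈ Hardy K) : mulF 1 f ∈ Hardy K := by
  simp only [Hardy, Submodule.mem_iInf, LinearMap.mem_ker, ContinuousLinearMap.coe_coe, innerSL_apply_apply] at hf ⊢
  intro n hn x
  rw [inner_expVec_mulF]
  exact hf (n - 1) (by omega) x

/-- The unilateral shift `S` on the Hardy space `H²(𝕋, K)`: the restriction of the
bilateral shift (multiplication by the variable) to the Hardy space. -/
def S : H2 K →L[ℂ] H2 K where
  toLinearMap := (mulF (E := K) 1).toLinearMap.restrict
    (p := Hardy K) (q := Hardy K) (fun _ hx => mulF_mem_hardy K hx)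
  cont := by
    apply Continuous.subtype_mk
    exact (mulF (E := K) 1).continuous.comp continuous_subtype_val

/-- The operator `Ŝ` on `L²(𝕋, H²(𝕋,K))`, acting pointwisely (on the values) as the
unilateral shift `S`. -/
def Shat : L2 (H2 K) →L[ℂ] L2 (H2 K) := (S K).compLpL 2 μT

lemma integral_fourier_eq_zero {m : ℤ} (hm : m ≠ 0) :
    ∫ t : 𝕋, fourier m t ∂μT = 0 := by
  have h0 : ((0:ℤ)) ≠ m := fun h => hm h.symm
  have h : inner ℂ (fourierLp (T := 1) 2 (0:ℤ)) (fourierLp 2 m) = 0 :=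
    orthonormal_fourier.2 h0
  rw [MeasureTheory.L2.inner_def] at h
  rw [← h]
  refine integral_congr_ae ?_
  filter_upwards [coeFn_fourierLp 2 (0:ℤ), coeFn_fourierLp 2 m] with t h1 h2
  rw [h1, h2]
  simp [fourier_zero]

lemma const_mem_hardy (x : K) : expVec K 0 x ∈ Hardy K := by
  simp only [Hardy, Submodule.mem_iInf, LinearMap.mem_ker, ContinuousLinearMap.coe_coe, innerSL_apply_apply]
  intro n hn y
  rw [MeasureTheory.L2.inner_def]
  have h : ∀ᵐ t ∂μT, inner ℂ ((expVec K n y : 𝕋 → K) t) ((expVec K 0 x : 𝕋 → K) t)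
      = fourier (-n) t * inner ℂ y x := by
    filter_upwards [coeFn_expVec K n y, coeFn_expVec K 0 x] with t h1 h2
    rw [h1, h2, inner_smul_left, inner_smul_right, ← fourier_neg, fourier_zero, one_mul]
  rw [integral_congr_ae h, integral_mul_const,
    integral_fourier_eq_zero (by omega), zero_mul]

/-- The linear embedding of `K` into `H²(𝕋,K)` as constant functions. -/
def constL : K →ₗ[ℂ] H2 K where
  toFun x := ⟨expVec K 0 x, const_mem_hardy K x⟩
  map_add' x y := by
    apply Subtype.ext
    simp only [Submodule.coe_add]
    unfold expVec
    rw [← map_add]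
    congr 1
    ext t
    simp [fourierSmulCM, smul_add]
  map_smul' c x := by
    apply Subtype.ext
    simp only [RingHom.id_apply, SetLike.val_smul]
    unfold expVec
    rw [← _root_.map_smul]
    congr 1
    ext t
    simp [fourierSmulCM]

end Shift


section RangeFunctions

variable {F : Type*} [NormedAddCommGroup F] [InnerProductSpace ℂ F] [CompleteSpace F]

/-- The orthogonal projection onto a closed subspace, as a plain function (defined to be `0`
if the subspace is not closed). -/
def projTo (N : Submodule ℂ F) (x : F) : F :=
  letI := Classical.dec (IsClosed ((N : Set F)))
  if h : IsClosed ((N : Set F)) then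
    haveI : CompleteSpace N := h.completeSpace_coe
    (orthogonalProjection N x : F)
  else 0

/-- A measurable range function in `F`: a map `J` from `𝕋` to closed subspaces of `F` such
that `t ↦ ⟪P_{J(t)} x, y⟫` is measurable for every `x, y ∈ F`. -/
def IsMeasRange (J : 𝕋 → Submodule ℂ F) : Prop :=
  (∀ t, IsClosed ((J t : Set F))) ∧
  ∀ x y : F, Measurable fun t => inner ℂ (projTo (J t) x) y

/-- The set of `f ∈ L²(𝕋, E)` such that `f(t) ∈ J(t)` for a.e. `t ∈ 𝕋`. -/
def rangeSet {E : Type*} [NormedAddCommGroup E] [NormedSpace ℂ E]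
    (J : 𝕋 → Submodule ℂ E) : Set (L2 E) :=
  {f | ∀ᵐ t ∂μT, (f : 𝕋 → E) t ∈ J t}

end RangeFunctions

section OperatorNotions

variable {E : Type*} [NormedAddCommGroup E] [NormedSpace ℂ E]

/-- A subspace `M` is invariant under the bounded operator `A` if `A(M) ⊆ M`. -/
def InvariantUnder (A : E →L[ℂ] E) (M : Submodule ℂ E) : Prop :=
  ∀ f ∈ M, A f ∈ M

/-- Two bounded operators commute. -/
def CommutesWith (A B : E →L[ℂ] E) : Prop := ∀ f, A (B f) = B (A f)

variable {F : Type*} [NormedAddCommGroup F] [InnerProductSpace ℂ F]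

/-- A subspace `M` is reducing for `A` if both `M` and `M^⊥` are invariant under `A`. -/
def Reducing (A : F →L[ℂ] F) (M : Submodule ℂ F) : Prop :=
  InvariantUnder A M ∧ InvariantUnder A Mᗮ

/-- `Φ` is a partial isometry with initial space `W`: it is isometric on `W` and vanishes
on `W^⊥`. -/
def IsPartialIsometryOn (Φ : F →L[ℂ] F) (W : Submodule ℂ F) : Prop :=
  (∀ f ∈ W, ‖Φ f‖ = ‖f‖) ∧ ∀ f ∈ Wᗮ, Φ f = 0

end OperatorNotions

section FullHardy

variable (K : Type) [NormedAddCommGroup K] [InnerProductSpace ℂ K] [CompleteSpace K]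

/-- For a subspace `N ⊆ K`, the subspace `H²_N` of `H²_K`: those elements of the Hardy space
taking values in `N` almost everywhere. -/
def hardyIn (N : Submodule ℂ K) : Submodule ℂ (H2 K) where
  carrier := {g | ∀ᵐ z ∂μT, ((g : L2 K) : 𝕋 → K) z ∈ N}
  zero_mem' := by
    have h0 : ((0 : H2 K) : L2 K) = 0 := rfl
    rw [Set.mem_setOf_eq, h0]
    filter_upwards [Lp.coeFn_zero K 2 μT] with z hz
    rw [hz]
    exact N.zero_mem
  add_mem' := by
    intro a b ha hb
    have h0 : ((a + b : H2 K) : L2 K) = (a : L2 K) + (b : L2 K) := rfl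
    rw [Set.mem_setOf_eq, h0]
    filter_upwards [ha, hb, Lp.coeFn_add (a : L2 K) (b : L2 K)] with z ha' hb' hadd
    rw [hadd]
    exact N.add_mem ha' hb'
  smul_mem' := by
    intro c a ha
    have h0 : ((c • a : H2 K) : L2 K) = c • (a : L2 K) := rfl
    rw [Set.mem_setOf_eq, h0]
    filter_upwards [ha, Lp.coeFn_smul c (a : L2 K)] with z ha' hsmul
    rw [hsmul]
    exact N.smul_mem c ha'

/-- The set of `f ∈ L²(𝕋, H²_K)` with `f(t) ∈ H²_{J(t)}` for a.e. `t`. If `J` is a measurable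
range function in `K`, this is the full-Hardy subspace with base `J`. -/
def fullHardySet (J : 𝕋 → Submodule ℂ K) : Set (L2 (H2 K)) :=
  {f | ∀ᵐ t ∂μT, (f : 𝕋 → H2 K) t ∈ hardyIn K (J t)}

/-- A subspace `W ⊆ L²(𝕋, H²_K)` is full-Hardy if it is of the form
`{f : f(t) ∈ H²_{J(t)} a.e.}` for some measurable range function `J` in `K`. -/
def IsFullHardy (W : Submodule ℂ (L2 (H2 K))) : Prop :=
  ∃ J : 𝕋 → Submodule ℂ K, IsMeasRange J ∧ (W : Set (L2 (H2 K))) = fullHardySet K J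

end FullHardy

section Dimension

open scoped Classical in
/-- The Hilbert-space dimension of a subspace, as an element of `ℕ∞` (in a separable ambient
space this is the cardinality of any orthonormal basis). -/
def dimSub {F : Type*} [NormedAddCommGroup F] [InnerProductSpace ℂ F]
    (N : Submodule ℂ F) : ℕ∞ :=
  if FiniteDimensional ℂ ↥N then (Module.finrank ℂ ↥N : ℕ∞) else ⊤

end Dimension

section ScalarCase

/-- Evaluation of an element of the scalar Hardy space (via its chosen representative). -/
def ev (g : H2 ℂ) (z : 𝕋) : ℂ := ((g : L2 ℂ) : 𝕋 → ℂ) z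

/-- Iterated evaluation of an element of `L²(𝕋, H²)`. -/
def ev2 (f : L2 (H2 ℂ)) (t z : 𝕋) : ℂ := ev ((f : 𝕋 → H2 ℂ) t) z

/-- A function `h ∈ H²` is inner if `|h(z)| = 1` for a.e. `z ∈ 𝕋`. -/
def IsInnerFn (g : H2 ℂ) : Prop := ∀ᵐ z ∂μT, ‖ev g z‖ = 1

lemma ev_zero : ∀ᵐ z ∂μT, ev (0 : H2 ℂ) z = 0 := by
  have h0 : ((0 : H2 ℂ) : L2 ℂ) = 0 := rfl
  unfold ev
  rw [h0]
  filter_upwards [Lp.coeFn_zero ℂ 2 μT] with z hz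
  rw [hz]
  rfl

lemma ev_add (u v : H2 ℂ) : ∀ᵐ z ∂μT, ev (u + v) z = ev u z + ev v z := by
  have h0 : ((u + v : H2 ℂ) : L2 ℂ) = (u : L2 ℂ) + (v : L2 ℂ) := rfl
  unfold ev
  rw [h0]
  filter_upwards [Lp.coeFn_add (u : L2 ℂ) (v : L2 ℂ)] with z hz
  rw [hz]
  rfl

lemma ev_smul (c : ℂ) (u : H2 ℂ) : ∀ᵐ z ∂μT, ev (c • u) z = c * ev u z := by
  have h0 : ((c • u : H2 ℂ) : L2 ℂ) = c • (u : L2 ℂ) := rfl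
  unfold ev
  rw [h0]
  filter_upwards [Lp.coeFn_smul c (u : L2 ℂ)] with z hz
  rw [hz]
  rfl

/-- For `w ∈ H²`, the subspace `w·H² = {w·k : k ∈ H²}` of `H²` (membership described via
a.e. pointwise multiplication of representatives). -/
def mulSet (w : H2 ℂ) : Submodule ℂ (H2 ℂ) where
  carrier := {u | ∃ k : H2 ℂ, ∀ᵐ z ∂μT, ev u z = ev w z * ev k z}
  zero_mem' := by
    refine ⟨0, ?_⟩
    filter_upwards [ev_zero] with z hz
    rw [hz, mul_zero]
  add_mem' := by
    rintro u v ⟨k₁, h₁⟩ ⟨k₂, h₂⟩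
    refine ⟨k₁ + k₂, ?_⟩
    filter_upwards [h₁, h₂, ev_add u v, ev_add k₁ k₂] with z e1 e2 e3 e4
    rw [e3, e1, e2, e4, mul_add]
  smul_mem' := by
    rintro c u ⟨k, h⟩
    refine ⟨c • k, ?_⟩
    filter_upwards [h, ev_smul c u, ev_smul c k] with z e1 e2 e3
    rw [e2, e1, e3]
    ring

/-- The set `φ·L²(𝕋, H²) = {φ g : g ∈ L²(𝕋,H²)}`, where `(φ g)(t)(z) = φ(t)(z)·g(t)(z)`. -/
def timesSet (φ : L2 (H2 ℂ)) : Set (L2 (H2 ℂ)) :=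
  {h | ∃ g : L2 (H2 ℂ), ∀ᵐ t ∂μT, ∀ᵐ z ∂μT, ev2 h t z = ev2 φ t z * ev2 g t z}

end ScalarCase

section Aux

instance : Fact ((2:ℝ≥0∞) ≠ ∞) := ⟨by norm_num⟩

/-- Pettis-type measurability criterion: in a second countable metric space, a function is
measurable as soon as its distance to every fixed point is measurable. -/
lemma measurable_of_measurable_dist' {X H : Type*} [MeasurableSpace X] [PseudoMetricSpace H]
    [SecondCountableTopology H] [MeasurableSpace H] [BorelSpace H] {f : X → H}
    (h : ∀ c : H, Measurable fun t => dist (f t) c) : Measurable f := by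
  apply measurable_of_isOpen
  intro U hU
  obtain ⟨s, hsc, hsd⟩ := TopologicalSpace.exists_countable_dense H
  haveI := hsc.to_subtype
  have hrepr : f ⁻¹' U = ⋃ (p : s × {q : ℚ // 0 < q}) (_ : Metric.ball (p.1 : H) (p.2 : ℚ) ⊆ U),
      {t | dist (f t) p.1 < ((p.2 : ℚ) : ℝ)} := by
    ext t
    simp only [Set.mem_preimage, Set.mem_iUnion, Set.mem_setOf_eq]
    constructor
    · intro ht
      obtain ⟨ε, hε, hball⟩ := Metric.isOpen_iff.1 hU _ ht
      obtain ⟨c, hcs, hcball⟩ := hsd.exists_mem_open Metric.isOpen_ball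
        ⟨f t, Metric.mem_ball_self (by positivity : (0:ℝ) < ε/3)⟩
      obtain ⟨q, hq1, hq2⟩ := exists_rat_btwn (show (ε/3 : ℝ) < ε/2 by linarith)
      have hq0 : (0:ℚ) < q := by
        have : (0:ℝ) < (q:ℝ) := lt_trans (by positivity) hq1
        exact_mod_cast this
      refine ⟨⟨⟨c, hcs⟩, ⟨q, hq0⟩⟩, ?_, ?_⟩
      · intro y hy
        apply hball
        have h1 : dist y c < (q:ℝ) := hy
        have h2 : dist c (f t) < ε/3 := by
          have := Metric.mem_ball.1 hcball
          rwa [dist_comm] at this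
        have : dist y (f t) ≤ dist y c + dist c (f t) := dist_triangle _ _ _
        have : dist y (f t) < ε := by
          calc dist y (f t) ≤ dist y c + dist c (f t) := dist_triangle _ _ _
            _ < (q:ℝ) + ε/3 := by linarith
            _ < ε/2 + ε/3 := by linarith
            _ ≤ ε := by linarith
        exact Metric.mem_ball.2 this
      · have h2 : dist (f t) c < ε/3 := by
          have := Metric.mem_ball.1 hcball
          rwa [dist_comm] at this
        calc dist (f t) c < ε/3 := h2
          _ < (q:ℝ) := hq1
    · rintro ⟨p, hsub, hlt⟩
      exact hsub (Metric.mem_ball.2 hlt)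
  rw [hrepr]
  refine MeasurableSet.iUnion fun p => MeasurableSet.iUnion fun _ => ?_
  exact measurableSet_lt (h (p.1 : H)) measurable_const

section ProjLemmas

variable {F : Type*} [NormedAddCommGroup F] [InnerProductSpace ℂ F] [CompleteSpace F]

lemma projTo_spec (N : Submodule ℂ F) (hN : IsClosed ((N : Set F))) (x : F) :
    haveI : CompleteSpace N := hN.completeSpace_coe
    projTo N x = (orthogonalProjection N x : F) := by
  simp only [projTo, dif_pos hN]

lemma projTo_mem (N : Submodule ℂ F) (hN : IsClosed ((N : Set F))) (x : F) :
    projTo N x ∈ N := by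
  haveI : CompleteSpace N := hN.completeSpace_coe
  rw [projTo_spec N hN]
  exact SetLike.coe_mem _

lemma projTo_self (N : Submodule ℂ F) (hN : IsClosed ((N : Set F))) {x : F} (hx : x ∈ N) :
    projTo N x = x := by
  haveI : CompleteSpace N := hN.completeSpace_coe
  rw [projTo_spec N hN]
  exact Submodule.starProjection_eq_self_iff.2 hx

lemma norm_projTo_le (N : Submodule ℂ F) (hN : IsClosed ((N : Set F))) (x : F) :
    ‖projTo N x‖ ≤ ‖x‖ := by
  haveI : CompleteSpace N := hN.completeSpace_coe
  rw [projTo_spec N hN]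
  calc ‖(orthogonalProjection N x : F)‖ = ‖orthogonalProjection N x‖ := rfl
    _ ≤ ‖orthogonalProjection N‖ * ‖x‖ := (orthogonalProjection N).le_opNorm x
    _ ≤ 1 * ‖x‖ := by
        have := orthogonalProjection_norm_le N
        have h0 : (0:ℝ) ≤ ‖x‖ := norm_nonneg x
        nlinarith
    _ = ‖x‖ := one_mul _

lemma dist_projTo_eq (N : Submodule ℂ F) (hN : IsClosed ((N : Set F))) (d c : F) :
    dist (projTo N d) c =
      Real.sqrt (Complex.re (inner ℂ (projTo N d) d)
        - 2 * Complex.re (inner ℂ (projTo N d) c) + ‖c‖ ^ 2) := by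
  haveI : CompleteSpace N := hN.completeSpace_coe
  set x := projTo N d with hx
  have hxsq : Complex.re (inner ℂ x x) = Complex.re (inner ℂ x d) := by
    have h0 : (inner ℂ (d - orthogonalProjection N d : F) x) = 0 :=
      Submodule.starProjection_inner_eq_zero d x (projTo_mem N hN d)
    have hx' : (orthogonalProjection N d : F) = x := (projTo_spec N hN d).symm
    rw [hx', inner_sub_left, sub_eq_zero] at h0
    rw [h0.symm, ← inner_conj_symm d x, Complex.conj_re]
  have hnorm : ‖x - c‖ ^ 2 = Complex.re (inner ℂ x d)
      - 2 * Complex.re (inner ℂ x c) + ‖c‖ ^ 2 := by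
    have h1 : ‖x - c‖ ^ 2 = ‖x‖ ^ 2 - 2 * Complex.re (inner ℂ x c) + ‖c‖ ^ 2 :=
      norm_sub_sq (𝕜 := ℂ) x c
    have h2 : ‖x‖ ^ 2 = Complex.re (inner ℂ x x) := norm_sq_eq_re_inner (𝕜 := ℂ) x
    rw [h1, h2, hxsq]
  rw [dist_eq_norm, ← hnorm]
  exact (Real.sqrt_sq (norm_nonneg _)).symm

lemma stronglyMeasurable_projTo [SecondCountableTopology F]
    {J : 𝕋 → Submodule ℂ F} (hJ : IsMeasRange J) (d : F) :
    MeasureTheory.StronglyMeasurable (fun t => projTo (J t) d) := by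
  letI : MeasurableSpace F := borel F
  haveI : BorelSpace F := ⟨rfl⟩
  refine Measurable.stronglyMeasurable ?_
  apply measurable_of_measurable_dist'
  intro c
  have hkey : (fun t => dist (projTo (J t) d) c) = fun t =>
      Real.sqrt (Complex.re (inner ℂ (projTo (J t) d) d)
        - 2 * Complex.re (inner ℂ (projTo (J t) d) c) + ‖c‖ ^ 2) :=
    funext fun t => dist_projTo_eq (J t) (hJ.1 t) d c
  rw [hkey]
  have h1 : Measurable fun t => Complex.re (inner ℂ (projTo (J t) d) d) :=
    Complex.measurable_re.comp (hJ.2 d d)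
  have h2 : Measurable fun t => Complex.re (inner ℂ (projTo (J t) d) c) :=
    Complex.measurable_re.comp (hJ.2 d c)
  exact Real.continuous_sqrt.measurable.comp
    (((h1.sub (h2.const_mul 2)).add measurable_const))

end ProjLemmas

end Aux

section Statements

variable (K : Type) [NormedAddCommGroup K] [InnerProductSpace ℂ K] [CompleteSpace K]
  [SecondCountableTopology K]

theorem statement9 (M : Submodule ℂ (L2 (H2 K))) (hMc : IsClosed ((M : Set (L2 (H2 K)))))
    (hred : Reducing (F := L2 (H2 K)) (mulF 1) M)
    (J : 𝕋 → Submodule ℂ (H2 K)) (hJ : IsMeasRange J)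
    (hMJ : (M : Set (L2 (H2 K))) = rangeSet J) :
    InvariantUnder (E := L2 (H2 K)) (Shat K) M ↔ ∀ᵐ t ∂μT, ∀ g ∈ J t, S K g ∈ J t := by
  have hmemM : ∀ f : L2 (H2 K), f ∈ M ↔ ∀ᵐ t ∂μT, (f : 𝕋 → H2 K) t ∈ J t := by
    intro f
    constructor
    · intro hf
      have : f ∈ (M : Set (L2 (H2 K))) := hf
      rw [hMJ] at this
      exact this
    · intro hf
      have : f ∈ (M : Set (L2 (H2 K))) := by rw [hMJ]; exact hf
      exact this
  have hShat : ∀ f : L2 (H2 K), (Shat K f : 𝕋 → H2 K) =ᵐ[μT]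
      fun t => S K ((f : 𝕋 → H2 K) t) := fun f => (S K).coeFn_compLpL f
  constructor
  · intro hinv
    haveI : Nonempty (H2 K) := ⟨0⟩
    set u : ℕ → H2 K := TopologicalSpace.denseSeq (H2 K) with hu_def
    have hu : DenseRange u := TopologicalSpace.denseRange_denseSeq (H2 K)
    -- each projection field lies in M, hence is shifted into M
    have hkey : ∀ n : ℕ, ∀ᵐ t ∂μT, S K (projTo (J t) (u n)) ∈ J t := by
      intro n
      have hsm := stronglyMeasurable_projTo hJ (u n)
      have hmem : MemLp (fun t => projTo (J t) (u n)) 2 μT := by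
        refine MemLp.of_le (memLp_const (‖u n‖)) hsm.aestronglyMeasurable ?_
        refine Filter.Eventually.of_forall fun t => ?_
        calc ‖projTo (J t) (u n)‖ ≤ ‖u n‖ := norm_projTo_le (J t) (hJ.1 t) (u n)
          _ ≤ ‖(‖u n‖)‖ := le_abs_self _
      set fn : L2 (H2 K) := hmem.toLp _ with hfn_def
      have hfn_coe : (fn : 𝕋 → H2 K) =ᵐ[μT] fun t => projTo (J t) (u n) := hmem.coeFn_toLp
      have hfnM : fn ∈ M := by
        rw [hmemM]
        filter_upwards [hfn_coe] with t ht
        rw [ht]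
        exact projTo_mem (J t) (hJ.1 t) (u n)
      have hSfnM := hinv fn hfnM
      rw [hmemM] at hSfnM
      filter_upwards [hSfnM, hShat fn, hfn_coe] with t h1 h2 h3
      rw [h2, h3] at h1
      exact h1
    have hall : ∀ᵐ t ∂μT, ∀ n : ℕ, S K (projTo (J t) (u n)) ∈ J t := ae_all_iff.2 hkey
    filter_upwards [hall] with t ht
    intro g hg
    have hcl : IsClosed ((J t : Set (H2 K))) := hJ.1 t
    have : S K g ∈ (J t : Set (H2 K)) := by
      rw [← hcl.closure_eq]
      rw [Metric.mem_closure_iff]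
      intro ε hε
      set C : ℝ := ‖S K‖ + 1 with hC
      have hC0 : (0:ℝ) < C := by positivity
      obtain ⟨n, hn⟩ := Metric.denseRange_iff.1 hu g (ε / C) (by positivity)
      refine ⟨S K (projTo (J t) (u n)), ht n, ?_⟩
      have hproj : ‖g - projTo (J t) (u n)‖ ≤ ‖g - u n‖ := by
        have h1 : g - projTo (J t) (u n) = projTo (J t) g - projTo (J t) (u n) := by
          rw [projTo_self (J t) hcl hg]
        haveI : CompleteSpace (J t) := hcl.completeSpace_coe
        have h2 : projTo (J t) g - projTo (J t) (u n) = projTo (J t) (g - u n) := by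
          rw [projTo_spec (J t) hcl, projTo_spec (J t) hcl, projTo_spec (J t) hcl,
            map_sub]
          rfl
        rw [h1, h2]
        exact norm_projTo_le (J t) hcl (g - u n)
      calc dist (S K g) (S K (projTo (J t) (u n)))
          = ‖S K g - S K (projTo (J t) (u n))‖ := dist_eq_norm _ _
        _ = ‖S K (g - projTo (J t) (u n))‖ := by rw [map_sub]
        _ ≤ ‖S K‖ * ‖g - projTo (J t) (u n)‖ := (S K).le_opNorm _
        _ ≤ ‖S K‖ * ‖g - u n‖ := by
            have := norm_nonneg (S K)
            nlinarith [norm_nonneg (g - projTo (J t) (u n))]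
        _ < C * (ε / C) := by
            have hdist : ‖g - u n‖ < ε / C := by rw [← dist_eq_norm]; exact hn
            have hle : ‖S K‖ < C := by rw [hC]; linarith
            have h0 : (0:ℝ) ≤ ‖g - u n‖ := norm_nonneg _
            nlinarith [div_pos hε hC0]
        _ = ε := by field_simp
    exact this
  · intro hae f hf
    rw [hmemM] at hf
    rw [hmemM]
    filter_upwards [hae, hf, hShat f] with t h1 h2 h3
    rw [h3]
    exact h1 _ h2


end Statements

end ShiftPaper
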